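/- Let F_k → F in ℝ^{n×n} with F stable (all eigenvalues have strictly negative real part), let α_k > 0 with α_k → 0 and Σ α_k = ∞, and let e_k, v_k ∈ ℝⁿ satisfy: the series Σ_{k=1}^∞ α_k e_k converges and v_k → 0. Then the sequence defined by y_{k+1} = y_k + α_k F_k y_k + α_k(e_k + v_k), with arbitrary initial value y_0, satisfies y_k → 0. -/

import Mathlib

open Matrix Filter Polynomial

namespace Stmt6Helper

variable {n : ℕ}

/-- entrywise ℓ¹ bound constant for `mulVec` w.r.t. sup norms. -/
noncomputable def mvB {𝕜 : Type*} [NormedField 𝕜] (A : Matrix (Fin n) (Fin n) 𝕜) : ℝ :=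
  ∑ i, ∑ j, ‖A i j‖

lemma mvB_nonneg {𝕜 : Type*} [NormedField 𝕜] (A : Matrix (Fin n) (Fin n) 𝕜) : 0 ≤ mvB A := by
  unfold mvB; positivity

lemma norm_mulVec_le {𝕜 : Type*} [NormedField 𝕜] (A : Matrix (Fin n) (Fin n) 𝕜)
    (x : Fin n → 𝕜) : ‖A.mulVec x‖ ≤ mvB A * ‖x‖ := by
  have hB := mvB_nonneg A
  refine (pi_norm_le_iff_of_nonneg (by positivity)).2 fun i => ?_
  have h1 : A.mulVec x i = ∑ j, A i j * x j := rfl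
  rw [h1]
  calc ‖∑ j, A i j * x j‖ ≤ ∑ j, ‖A i j‖ * ‖x j‖ := by
        refine (norm_sum_le _ _).trans ?_
        exact Finset.sum_le_sum fun j _ => by rw [norm_mul]
    _ ≤ ∑ j, ‖A i j‖ * ‖x‖ := Finset.sum_le_sum fun j _ =>
        mul_le_mul_of_nonneg_left (norm_le_pi_norm x j) (norm_nonneg _)
    _ = (∑ j, ‖A i j‖) * ‖x‖ := by rw [Finset.sum_mul]
    _ ≤ mvB A * ‖x‖ := by
        refine mul_le_mul_of_nonneg_right ?_ (norm_nonneg _)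
        exact Finset.single_le_sum (f := fun i => ∑ j, ‖A i j‖)
          (fun i _ => by positivity) (Finset.mem_univ i)

/-- The key scalar recursion lemma. -/
lemma scalar_rec (a b α : ℕ → ℝ) (η : ℝ) (hη : 0 < η) (K : ℕ)
    (ha : ∀ k, 0 ≤ a k) (hb : ∀ k, 0 ≤ b k) (hb0 : Tendsto b atTop (nhds 0))
    (hα : ∀ k, K ≤ k → 0 ≤ α k ∧ η * α k ≤ 1)
    (hdiv : Tendsto (fun N => ∑ k ∈ Finset.range N, α k) atTop atTop)
    (hrec : ∀ k, K ≤ k → a (k + 1) ≤ (1 - η * α k) * a k + α k * b k) :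
    Tendsto a atTop (nhds 0) := by
  have key : ∀ ε : ℝ, 0 < ε → ∃ N, ∀ k, N ≤ k → a k < ε := by
    intro ε hε
    obtain ⟨N₀, hN₀⟩ := (Metric.tendsto_atTop.1 hb0) (η * ε / 2) (by positivity)
    set K₁ := max K N₀ with hK₁
    have hbK : ∀ k, K₁ ≤ k → b k ≤ η * ε / 2 := by
      intro k hk
      have := hN₀ k (le_trans (le_max_right _ _) hk)
      rw [Real.dist_eq, sub_zero, abs_of_nonneg (hb k)] at this
      exact this.le
    set d : ℕ → ℝ := fun k => a k - ε / 2 with hd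
    have hstep : ∀ k, K₁ ≤ k → d (k + 1) ≤ (1 - η * α k) * d k := by
      intro k hk
      have hKk : K ≤ k := le_trans (le_max_left _ _) hk
      have h1 := hrec k hKk
      have h2 : α k * b k ≤ α k * (η * ε / 2) :=
        mul_le_mul_of_nonneg_left (hbK k hk) (hα k hKk).1
      simp only [hd]
      nlinarith [h1, h2]
    set M := max (d K₁) 0 with hM
    have hM0 : 0 ≤ M := le_max_right _ _
    have hbound : ∀ m, d (K₁ + m) ≤ M * Real.exp (-η * ∑ j ∈ Finset.range m, α (K₁ + j)) := by
      intro m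
      induction m with
      | zero => simp [hM]
      | succ m ih =>
        have hk : K₁ ≤ K₁ + m := Nat.le_add_right _ _
        have hKk : K ≤ K₁ + m := le_trans (le_max_left _ _) hk
        have hα1 := hα _ hKk
        have h1 : (0:ℝ) ≤ 1 - η * α (K₁ + m) := by linarith [hα1.2]
        have h2 := hstep _ hk
        have h3 : (1 - η * α (K₁ + m)) * d (K₁ + m)
            ≤ (1 - η * α (K₁ + m)) * (M * Real.exp (-η * ∑ j ∈ Finset.range m, α (K₁ + j))) :=
          mul_le_mul_of_nonneg_left ih h1
        have h4 : 1 - η * α (K₁ + m) ≤ Real.exp (-(η * α (K₁ + m))) := by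
          have := Real.add_one_le_exp (-(η * α (K₁ + m)))
          linarith
        have h5 : (1 - η * α (K₁ + m)) * (M * Real.exp (-η * ∑ j ∈ Finset.range m, α (K₁ + j)))
            ≤ Real.exp (-(η * α (K₁ + m))) * (M * Real.exp (-η * ∑ j ∈ Finset.range m, α (K₁ + j))) :=
          mul_le_mul_of_nonneg_right h4 (by positivity)
        have h6 : Real.exp (-(η * α (K₁ + m))) * Real.exp (-η * ∑ j ∈ Finset.range m, α (K₁ + j))
            = Real.exp (-η * ∑ j ∈ Finset.range (m + 1), α (K₁ + j)) := by
          rw [← Real.exp_add, Finset.sum_range_succ]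
          congr 1; ring
        calc d (K₁ + (m + 1)) = d (K₁ + m + 1) := by rw [Nat.add_assoc]
          _ ≤ _ := h2
          _ ≤ _ := h3
          _ ≤ _ := h5
          _ = M * (Real.exp (-(η * α (K₁ + m))) * Real.exp (-η * ∑ j ∈ Finset.range m, α (K₁ + j))) := by ring
          _ = M * Real.exp (-η * ∑ j ∈ Finset.range (m + 1), α (K₁ + j)) := by rw [h6]
    have hshift : Tendsto (fun m => ∑ j ∈ Finset.range m, α (K₁ + j)) atTop atTop := by
      have heq : ∀ m, ∑ j ∈ Finset.range m, α (K₁ + j)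
          = (∑ k ∈ Finset.range (m + K₁), α k) - ∑ k ∈ Finset.range K₁, α k := by
        intro m
        induction m with
        | zero => simp
        | succ m ih =>
          have : m + 1 + K₁ = (m + K₁) + 1 := by omega
          rw [Finset.sum_range_succ, ih, this, Finset.sum_range_succ]
          have : K₁ + m = m + K₁ := by omega
          rw [this]; ring
      have h1 : Tendsto (fun m : ℕ => ∑ k ∈ Finset.range (m + K₁), α k) atTop atTop :=
        hdiv.comp (tendsto_add_atTop_nat K₁)
      have h2 := tendsto_atTop_add_const_right atTop (-∑ k ∈ Finset.range K₁, α k) h1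
      refine h2.congr fun m => ?_
      rw [heq m]; ring
    have hexp : Tendsto (fun m => M * Real.exp (-η * ∑ j ∈ Finset.range m, α (K₁ + j)))
        atTop (nhds 0) := by
      have h1 : Tendsto (fun m => -η * ∑ j ∈ Finset.range m, α (K₁ + j)) atTop atBot :=
        (tendsto_const_mul_atBot_of_neg (by linarith)).2 hshift
      have h2 := Real.tendsto_exp_atBot.comp h1
      have := h2.const_mul M
      simpa using this
    have hev : ∀ᶠ m in atTop, M * Real.exp (-η * ∑ j ∈ Finset.range m, α (K₁ + j)) < ε / 2 :=
      hexp.eventually_lt_const (by linarith)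
    obtain ⟨m₀, hm₀⟩ := eventually_atTop.1 hev
    refine ⟨K₁ + m₀, fun k hk => ?_⟩
    have hkk : k = K₁ + (k - K₁) := by omega
    have h1 := hbound (k - K₁)
    rw [← hkk] at h1
    have h2 := hm₀ (k - K₁) (by omega)
    have : d k < ε / 2 := lt_of_le_of_lt h1 h2
    simp only [hd] at this
    linarith
  rw [Metric.tendsto_atTop]
  intro ε hε
  obtain ⟨N, hN⟩ := key ε hε
  exact ⟨N, fun k hk => by rw [Real.dist_eq, sub_zero, abs_of_nonneg (ha k)]; exact hN k hk⟩


lemma charpoly_eval_eq_det (M : Matrix (Fin n) (Fin n) ℂ) (z : ℂ) :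
    M.charpoly.eval z = (algebraMap ℂ (Matrix (Fin n) (Fin n) ℂ) z - M).det := by
  rw [Matrix.charpoly, _root_.eval_det, Matrix.matPolyEquiv_charmatrix]
  rw [eval_sub, eval_X, eval_C]
  congr 1

lemma mem_spectrum_iff_root (M : Matrix (Fin n) (Fin n) ℂ) (z : ℂ) :
    z ∈ spectrum ℂ M ↔ M.charpoly.eval z = 0 := by
  rw [spectrum.mem_iff, charpoly_eval_eq_det]
  constructor
  · intro h
    by_contra hdet
    exact h ((Matrix.isUnit_iff_isUnit_det _).2 (isUnit_iff_ne_zero.2 hdet))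
  · intro h hU
    have := (Matrix.isUnit_iff_isUnit_det _).1 hU
    rw [h] at this
    exact (isUnit_iff_ne_zero.1 this) rfl

/-- contraction recursion in a normed space -/
lemma contraction_tendsto {E : Type*} [NormedAddCommGroup E] [NormedSpace ℂ E]
    (u c : ℕ → E) (lam : ℂ) (hlam : ‖lam‖ < 1)
    (hrec : ∀ m, u (m + 1) = lam • u m + c m) (hc : Tendsto c atTop (nhds 0)) :
    Tendsto u atTop (nhds 0) := by
  have hnorm : Tendsto (fun m => ‖u m‖) atTop (nhds 0) := by
    refine scalar_rec (fun m => ‖u m‖) (fun m => ‖c m‖) (fun _ => 1) (1 - ‖lam‖)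
      (by linarith) 0 (fun k => norm_nonneg _) (fun k => norm_nonneg _)
      (tendsto_zero_iff_norm_tendsto_zero.1 hc) (fun k _ => ⟨zero_le_one, by
        show (1 - ‖lam‖) * 1 ≤ 1; nlinarith [norm_nonneg lam]⟩) ?_ (fun k _ => ?_)
    · have : ∀ N : ℕ, ∑ k ∈ Finset.range N, (1:ℝ) = N := by simp
      simp only [this]
      exact tendsto_natCast_atTop_atTop
    · show ‖u (k + 1)‖ ≤ (1 - (1 - ‖lam‖) * 1) * ‖u k‖ + 1 * ‖c k‖
      rw [hrec k]
      calc ‖lam • u k + c k‖ ≤ ‖lam • u k‖ + ‖c k‖ := norm_add_le _ _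
        _ = ‖lam‖ * ‖u k‖ + ‖c k‖ := by rw [norm_smul]
        _ = (1 - (1 - ‖lam‖) * 1) * ‖u k‖ + 1 * ‖c k‖ := by ring
  exact tendsto_zero_iff_norm_tendsto_zero.2 hnorm

/-- Cayley–Hamilton style induction: if `(∏ (X - a))(B) x = 0` with all `‖a‖ < 1`,
then `B^m x → 0`. -/
lemma tendsto_pow_mulVec_aux (B : Matrix (Fin n) (Fin n) ℂ) (s : Multiset ℂ)
    (hs : ∀ z ∈ s, ‖z‖ < 1) :
    ∀ x : Fin n → ℂ, (Polynomial.aeval B (s.map fun a => X - C a).prod).mulVec x = 0 →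
      Tendsto (fun m => (B ^ m).mulVec x) atTop (nhds 0) := by
  induction s using Multiset.induction with
  | empty =>
    intro x hx
    simp only [Multiset.map_zero, Multiset.prod_zero, _root_.map_one, Matrix.one_mulVec] at hx
    subst hx
    simp only [Matrix.mulVec_zero]
    exact tendsto_const_nhds
  | cons lam s ih =>
    intro x hx
    have hlam : ‖lam‖ < 1 := hs lam (Multiset.mem_cons_self _ _)
    have hs' : ∀ z ∈ s, ‖z‖ < 1 := fun z hz => hs z (Multiset.mem_cons_of_mem hz)
    set x' : Fin n → ℂ := (B - lam • 1).mulVec x with hx'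
    have hBl : Polynomial.aeval B (X - C lam) = B - lam • 1 := by
      rw [map_sub, aeval_X, aeval_C, Algebra.algebraMap_eq_smul_one]
    have key : Polynomial.aeval B ((Multiset.map (fun a => X - C a) (lam ::ₘ s)).prod)
        = Polynomial.aeval B ((Multiset.map (fun a => X - C a) s).prod) * (B - lam • 1) := by
      rw [Multiset.map_cons, Multiset.prod_cons, mul_comm, _root_.map_mul, hBl]
    have hQ : (Polynomial.aeval B (s.map fun a => X - C a).prod).mulVec x' = 0 := by
      rw [hx', Matrix.mulVec_mulVec, ← key, hx]
    have hc : Tendsto (fun m => (B ^ m).mulVec x') atTop (nhds 0) := ih hs' x' hQ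
    refine contraction_tendsto _ (fun m => (B ^ m).mulVec x') lam hlam (fun m => ?_) hc
    have hBx : B.mulVec x = lam • x + x' := by
      rw [hx', Matrix.sub_mulVec, Matrix.smul_mulVec, Matrix.one_mulVec]
      abel
    rw [pow_succ, ← Matrix.mulVec_mulVec, hBx, Matrix.mulVec_add, Matrix.mulVec_smul]


/-- complexification of a real vector -/
def cpx (x : Fin n → ℝ) : Fin n → ℂ := fun i => (x i : ℂ)

lemma cpx_add (x y : Fin n → ℝ) : cpx (x + y) = cpx x + cpx y := by
  funext i; simp [cpx]

lemma cpx_smul (a : ℝ) (x : Fin n → ℝ) : cpx (a • x) = (a : ℂ) • cpx x := by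
  funext i; simp [cpx]

lemma cpx_norm (x : Fin n → ℝ) : ‖cpx x‖ = ‖x‖ := by
  rw [Pi.norm_def, Pi.norm_def]
  congr 1
  refine Finset.sup_congr rfl fun i _ => ?_
  exact Complex.nnnorm_real (x i)

lemma cpx_mulVec (A : Matrix (Fin n) (Fin n) ℝ) (x : Fin n → ℝ) :
    cpx (A.mulVec x) = (A.map (Complex.ofReal : ℝ → ℂ)).mulVec (cpx x) := by
  funext i
  have := RingHom.map_mulVec (Complex.ofRealHom) A x i
  exact this

lemma mvB_pow_tendsto (B : Matrix (Fin n) (Fin n) ℂ)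
    (h : ∀ x, Tendsto (fun m => (B ^ m).mulVec x) atTop (nhds 0)) :
    Tendsto (fun m => mvB (B ^ m)) atTop (nhds 0) := by
  have hent : ∀ i j, Tendsto (fun m => (B ^ m) i j) atTop (nhds 0) := by
    intro i j
    have h1 := h (Pi.single j 1)
    have h2 := (tendsto_pi_nhds.1 h1) i
    simpa [Matrix.mulVec_single] using h2
  have : Tendsto (fun m => ∑ i, ∑ j, ‖(B ^ m) i j‖) atTop (nhds 0) := by
    have h0 : (0:ℝ) = ∑ i : Fin n, ∑ j : Fin n, (0:ℝ) := by simp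
    rw [h0]
    refine tendsto_finset_sum _ fun i _ => ?_
    refine tendsto_finset_sum _ fun j _ => ?_
    simpa using (hent i j).norm
  exact this

lemma exists_good_norm (Flim : Matrix (Fin n) (Fin n) ℝ)
    (hstable : ∀ z ∈ spectrum ℂ (Flim.map (Complex.ofReal : ℝ → ℂ)), z.re < 0) :
    ∃ (φ : (Fin n → ℝ) → ℝ) (Cφ α₀ η : ℝ), 0 < α₀ ∧ 0 < η ∧ 0 ≤ Cφ ∧
      (∀ x, ‖x‖ ≤ φ x) ∧ (∀ x, φ x ≤ Cφ * ‖x‖) ∧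
      (∀ x y, φ (x + y) ≤ φ x + φ y) ∧
      (∀ (a : ℝ) (x : Fin n → ℝ), 0 ≤ a → φ (a • x) = a * φ x) ∧
      (∀ (α : ℝ) (x : Fin n → ℝ), 0 ≤ α → α ≤ α₀ →
        φ (x + α • Flim.mulVec x) ≤ (1 - η * α) * φ x) := by
  classical
  set Mc := Flim.map (Complex.ofReal : ℝ → ℂ) with hMc
  set S := Mc.charpoly.roots with hS
  have hcpne : Mc.charpoly ≠ 0 := (Matrix.charpoly_monic Mc).ne_zero
  have hroots : ∀ z ∈ S, z.re < 0 := by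
    intro z hz
    exact hstable z ((mem_spectrum_iff_root Mc z).2 (Polynomial.mem_roots'.1 hz).2)
  set g : ℂ → ℝ := fun μ => -2 * μ.re / (Complex.normSq μ + 1) with hg
  have hgpos : ∀ μ ∈ S, 0 < g μ := by
    intro μ hμ
    have h1 := hroots μ hμ
    have h2 : 0 < Complex.normSq μ + 1 := by
      have := Complex.normSq_nonneg μ; linarith
    exact div_pos (by linarith) h2
  set α₀ : ℝ := if hSne : S.toFinset.Nonempty then min 1 (S.toFinset.inf' hSne g) else 1
    with hα₀def
  have hα₀pos : 0 < α₀ := by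
    rw [hα₀def]
    split_ifs with hSne
    · refine lt_min one_pos ?_
      rw [Finset.lt_inf'_iff]
      exact fun μ hμ => hgpos μ (Multiset.mem_toFinset.1 hμ)
    · exact one_pos
  have hα₀le : ∀ μ ∈ S, α₀ ≤ g μ := by
    intro μ hμ
    have hμ' : μ ∈ S.toFinset := Multiset.mem_toFinset.2 hμ
    have hSne : S.toFinset.Nonempty := ⟨μ, hμ'⟩
    rw [hα₀def, dif_pos hSne]
    exact le_trans (min_le_right _ _) (Finset.inf'_le g hμ')
  set B := 1 + (α₀ : ℂ) • Mc with hB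
  -- all roots of the char poly of B lie in the open unit disc
  have hBroots : ∀ z, B.charpoly.eval z = 0 → ‖z‖ < 1 := by
    intro z hz
    have hzspec : z ∈ spectrum ℂ B := (mem_spectrum_iff_root B z).2 hz
    rw [spectrum.mem_iff] at hzspec
    have hdet : (algebraMap ℂ (Matrix (Fin n) (Fin n) ℂ) z - B).det = 0 := by
      by_contra h
      exact hzspec ((Matrix.isUnit_iff_isUnit_det _).2 (isUnit_iff_ne_zero.2 h))
    have hα₀ne : ((α₀ : ℝ) : ℂ) ≠ 0 := by
      simpa using ne_of_gt hα₀pos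
    set μ : ℂ := (z - 1) / (α₀ : ℂ) with hμdef
    have hz1 : z = 1 + (α₀ : ℂ) * μ := by
      rw [hμdef, mul_div_assoc', mul_div_cancel_left₀ _ hα₀ne]; ring
    have hfact : algebraMap ℂ (Matrix (Fin n) (Fin n) ℂ) z - B
        = (α₀ : ℂ) • (algebraMap ℂ (Matrix (Fin n) (Fin n) ℂ) μ - Mc) := by
      rw [Algebra.algebraMap_eq_smul_one, Algebra.algebraMap_eq_smul_one, hB]
      rw [smul_sub, smul_smul]
      have h1 : z • (1 : Matrix (Fin n) (Fin n) ℂ) - (1 + (α₀:ℂ) • Mc)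
          = (z - 1) • (1 : Matrix (Fin n) (Fin n) ℂ) - (α₀:ℂ) • Mc := by
        rw [sub_smul, one_smul]; abel
      rw [h1]
      congr 2
      rw [hμdef, mul_div_assoc', mul_div_cancel_left₀ _ hα₀ne]
    have hdetμ : (algebraMap ℂ (Matrix (Fin n) (Fin n) ℂ) μ - Mc).det = 0 := by
      rw [hfact, Matrix.det_smul] at hdet
      have hpow : ((α₀:ℂ)) ^ (Fintype.card (Fin n)) ≠ 0 := pow_ne_zero _ hα₀ne
      exact (mul_eq_zero.1 hdet).resolve_left hpow
    have hμspec : μ ∈ spectrum ℂ Mc := by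
      rw [spectrum.mem_iff]
      intro hU
      have := (Matrix.isUnit_iff_isUnit_det _).1 hU
      rw [hdetμ] at this
      exact (isUnit_iff_ne_zero.1 this) rfl
    have hμroot : μ ∈ S := by
      rw [hS, Polynomial.mem_roots']
      exact ⟨hcpne, (mem_spectrum_iff_root Mc μ).1 hμspec⟩
    have h1 := hα₀le μ hμroot
    have h2 := hroots μ hμroot
    -- numeric estimate
    have hden : 0 < Complex.normSq μ + 1 := by
      have := Complex.normSq_nonneg μ; linarith
    have h3 : α₀ * (Complex.normSq μ + 1) ≤ -2 * μ.re := by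
      rw [hg] at h1
      calc α₀ * (Complex.normSq μ + 1) ≤ (-2 * μ.re / (Complex.normSq μ + 1)) * (Complex.normSq μ + 1) :=
            mul_le_mul_of_nonneg_right h1 hden.le
        _ = -2 * μ.re := by field_simp
    have hzre : z.re = 1 + α₀ * μ.re := by rw [hz1]; simp
    have hzim : z.im = α₀ * μ.im := by rw [hz1]; simp
    have hnsq : Complex.normSq z = z.re ^ 2 + z.im ^ 2 := by
      rw [Complex.normSq_apply]; ring
    have hnsqμ : Complex.normSq μ = μ.re ^ 2 + μ.im ^ 2 := by
      rw [Complex.normSq_apply]; ring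
    have hlt : Complex.normSq z < 1 := by
      rw [hnsq, hzre, hzim]
      rw [hnsqμ] at h3
      nlinarith [sq_nonneg μ.im, sq_nonneg μ.re, hα₀pos]
    have hnormsq : ‖z‖ ^ 2 = Complex.normSq z := by
      rw [Complex.sq_norm]
    nlinarith [norm_nonneg z, hnormsq, hlt]
  -- B^m x → 0 for all x
  have hsplit : B.charpoly = (B.charpoly.roots.map fun a => X - C a).prod :=
    ((IsAlgClosed.splits _).eq_prod_roots_of_monic (Matrix.charpoly_monic B))
  have hpow : ∀ x : Fin n → ℂ, Tendsto (fun m => (B ^ m).mulVec x) atTop (nhds 0) := by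
    intro x
    refine tendsto_pow_mulVec_aux B B.charpoly.roots
      (fun z hz => hBroots z (Polynomial.mem_roots'.1 hz).2) x ?_
    rw [← hsplit, Matrix.aeval_self_charpoly, Matrix.zero_mulVec]
  -- choose m₀ with mvB (B ^ m₀) ≤ 1/2
  obtain ⟨m₁, hm₁⟩ := eventually_atTop.1 ((mvB_pow_tendsto B hpow).eventually_lt_const
    (by norm_num : (0:ℝ) < 1/2))
  set m₀ := max 1 m₁ with hm₀def
  have hm₀pos : 1 ≤ m₀ := le_max_left _ _
  have hm₀ : mvB (B ^ m₀) ≤ 1 / 2 := (hm₁ m₀ (le_max_right _ _)).le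
  -- choose c with 1 < c and c ^ m₀ ≤ 2
  obtain ⟨c, hc1, hc2⟩ : ∃ c : ℝ, 1 < c ∧ c ^ m₀ ≤ 2 := by
    have h1 : Tendsto (fun t : ℝ => t ^ m₀) (nhds 1) (nhds 1) := by
      have := (continuous_pow m₀).tendsto (1 : ℝ)
      simpa using this
    have h2 : ∀ᶠ t : ℝ in nhds 1, t ^ m₀ < 2 := h1.eventually_lt_const (by norm_num)
    have h3 : ∀ᶠ t : ℝ in nhdsWithin 1 (Set.Ioi 1), t ^ m₀ < 2 :=
      nhdsWithin_le_nhds h2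
    have h4 : ∀ᶠ t : ℝ in nhdsWithin 1 (Set.Ioi 1), 1 < t :=
      eventually_mem_nhdsWithin.mono fun t ht => ht
    obtain ⟨c, hc2, hc1⟩ := (h3.and h4).exists
    exact ⟨c, hc1, hc2.le⟩
  have hcpos : 0 < c := lt_trans one_pos hc1
  -- the adapted complex norm
  set φc : (Fin n → ℂ) → ℝ := fun X => ∑ j ∈ Finset.range m₀, c ^ j * ‖(B ^ j).mulVec X‖
    with hφc
  have hφc_nonneg : ∀ X, 0 ≤ φc X := by
    intro X; rw [hφc]
    exact Finset.sum_nonneg fun j _ => by positivity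
  have hφc_le_norm : ∀ X, ‖X‖ ≤ φc X := by
    intro X
    have h0 : (0:ℕ) ∈ Finset.range m₀ := Finset.mem_range.2 hm₀pos
    have := Finset.single_le_sum (f := fun j => c ^ j * ‖(B ^ j).mulVec X‖)
      (fun j _ => by positivity) h0
    simpa [Matrix.one_mulVec] using this
  have hφc_add : ∀ X Y, φc (X + Y) ≤ φc X + φc Y := by
    intro X Y
    rw [hφc, ← Finset.sum_add_distrib]
    refine Finset.sum_le_sum fun j _ => ?_
    rw [Matrix.mulVec_add, ← mul_add]
    exact mul_le_mul_of_nonneg_left (norm_add_le _ _) (by positivity)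
  have hφc_smul : ∀ (a : ℂ) X, φc (a • X) = ‖a‖ * φc X := by
    intro a X
    rw [hφc, Finset.mul_sum]
    refine Finset.sum_congr rfl fun j _ => ?_
    rw [Matrix.mulVec_smul, norm_smul]
    ring
  set Cφ : ℝ := ∑ j ∈ Finset.range m₀, c ^ j * mvB (B ^ j) with hCφ
  have hCφ0 : 0 ≤ Cφ := Finset.sum_nonneg fun j _ =>
    mul_nonneg (by positivity) (mvB_nonneg _)
  have hφc_le : ∀ X, φc X ≤ Cφ * ‖X‖ := by
    intro X
    rw [hφc, hCφ, Finset.sum_mul]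
    refine Finset.sum_le_sum fun j _ => ?_
    rw [mul_assoc]
    exact mul_le_mul_of_nonneg_left (norm_mulVec_le _ _) (by positivity)
  -- contraction property of the adapted norm
  have hφB : ∀ X, φc (B.mulVec X) ≤ (1 / c) * φc X := by
    intro X
    set gg : ℕ → ℝ := fun j => c ^ j * ‖(B ^ j).mulVec X‖ with hgg
    have hsum : φc (B.mulVec X) = (1 / c) * ∑ j ∈ Finset.range m₀, gg (j + 1) := by
      rw [hφc, Finset.mul_sum]
      refine Finset.sum_congr rfl fun j _ => ?_
      rw [hgg]
      simp only []
      rw [Matrix.mulVec_mulVec, ← pow_succ]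
      rw [pow_succ]
      field_simp
      ring
    have h1 : ∑ j ∈ Finset.range (m₀ + 1), gg j
        = (∑ j ∈ Finset.range m₀, gg (j + 1)) + gg 0 := Finset.sum_range_succ' gg m₀
    have h2 : ∑ j ∈ Finset.range (m₀ + 1), gg j
        = (∑ j ∈ Finset.range m₀, gg j) + gg m₀ := Finset.sum_range_succ gg m₀
    have hg0 : gg 0 = ‖X‖ := by simp [hgg, Matrix.one_mulVec]
    have hgm₀ : gg m₀ ≤ ‖X‖ := by
      have hb := norm_mulVec_le (B ^ m₀) X
      have hmv := mvB_nonneg (B ^ m₀)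
      have hcm : (0:ℝ) < c ^ m₀ := by positivity
      calc gg m₀ = c ^ m₀ * ‖(B ^ m₀).mulVec X‖ := rfl
        _ ≤ c ^ m₀ * (mvB (B ^ m₀) * ‖X‖) :=
            mul_le_mul_of_nonneg_left hb hcm.le
        _ ≤ 2 * ((1/2) * ‖X‖) := by
            nlinarith [norm_nonneg X, mul_nonneg hmv (norm_nonneg X)]
        _ = ‖X‖ := by ring
    have h3 : ∑ j ∈ Finset.range m₀, gg (j + 1) ≤ φc X := by
      have hφcX : φc X = ∑ j ∈ Finset.range m₀, gg j := rfl
      rw [hφcX]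
      linarith
    rw [hsum]
    exact mul_le_mul_of_nonneg_left h3 (by positivity)
  -- parameters
  set η : ℝ := (1 - 1 / c) / α₀ with hηdef
  have hc' : 1 / c < 1 := by rw [div_lt_one hcpos]; exact hc1
  have hηpos : 0 < η := div_pos (by linarith) hα₀pos
  set φ : (Fin n → ℝ) → ℝ := fun x => φc (cpx x) with hφdef
  refine ⟨φ, Cφ, α₀, η, hα₀pos, hηpos, hCφ0, ?_, ?_, ?_, ?_, ?_⟩
  · intro x
    rw [hφdef]
    simpa [cpx_norm] using hφc_le_norm (cpx x)
  · intro x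
    rw [hφdef]
    simpa [cpx_norm] using hφc_le (cpx x)
  · intro x y
    rw [hφdef]
    simp only [cpx_add]
    exact hφc_add _ _
  · intro a x ha
    rw [hφdef]
    simp only [cpx_smul]
    rw [hφc_smul]
    rw [Complex.norm_real, Real.norm_eq_abs, abs_of_nonneg ha]
  · intro α x h0 hαle
    set θ : ℝ := α / α₀ with hθdef
    have hθ0 : 0 ≤ θ := div_nonneg h0 hα₀pos.le
    have hθ1 : θ ≤ 1 := (div_le_one hα₀pos).2 hαle
    have hα₀ne : (α₀ : ℝ) ≠ 0 := ne_of_gt hα₀pos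
    have hXdecomp : cpx (x + α • Flim.mulVec x)
        = ((1 - θ : ℝ) : ℂ) • cpx x + ((θ : ℝ) : ℂ) • (B.mulVec (cpx x)) := by
      rw [cpx_add, cpx_smul, cpx_mulVec, ← hMc]
      rw [hB, Matrix.add_mulVec, Matrix.one_mulVec, Matrix.smul_mulVec]
      rw [smul_add, smul_smul]
      have hθα : ((θ : ℝ) : ℂ) * ((α₀ : ℝ) : ℂ) = ((α : ℝ) : ℂ) := by
        rw [hθdef]; push_cast
        rw [div_mul_cancel₀]
        exact_mod_cast hα₀ne
      rw [hθα]
      have hone : ((1 - θ : ℝ) : ℂ) • cpx x + ((θ : ℝ) : ℂ) • cpx x = cpx x := by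
        rw [← add_smul]
        have : ((1 - θ : ℝ) : ℂ) + ((θ : ℝ) : ℂ) = 1 := by push_cast; ring
        rw [this, one_smul]
      rw [← add_assoc, hone]
    have hcalc : φ (x + α • Flim.mulVec x) ≤ (1 - (1 - 1/c) * θ) * φc (cpx x) := by
      rw [hφdef]
      simp only [hXdecomp]
      calc φc (((1 - θ : ℝ) : ℂ) • cpx x + ((θ : ℝ) : ℂ) • (B.mulVec (cpx x)))
          ≤ φc (((1 - θ : ℝ) : ℂ) • cpx x) + φc (((θ : ℝ) : ℂ) • (B.mulVec (cpx x))) :=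
            hφc_add _ _
        _ = ‖((1 - θ : ℝ) : ℂ)‖ * φc (cpx x) + ‖((θ : ℝ) : ℂ)‖ * φc (B.mulVec (cpx x)) := by
            rw [hφc_smul, hφc_smul]
        _ = (1 - θ) * φc (cpx x) + θ * φc (B.mulVec (cpx x)) := by
            rw [Complex.norm_real, Complex.norm_real, Real.norm_eq_abs, Real.norm_eq_abs,
              abs_of_nonneg hθ0, abs_of_nonneg (by linarith : (0:ℝ) ≤ 1 - θ)]
        _ ≤ (1 - θ) * φc (cpx x) + θ * ((1/c) * φc (cpx x)) := by
            have := mul_le_mul_of_nonneg_left (hφB (cpx x)) hθ0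
            linarith
        _ = (1 - (1 - 1/c) * θ) * φc (cpx x) := by ring
    have hfin : (1 - (1 - 1/c) * θ) = 1 - η * α := by
      rw [hηdef, hθdef]
      field_simp
    rw [hfin] at hcalc
    exact hcalc


end Stmt6Helper


open Matrix Filter

/-- Deterministic stability lemma (Chen, Lemma 3.1.1): if `F_k → F` with `F` stable,
`α_k > 0`, `α_k → 0`, `Σ α_k = ∞`, `Σ α_k e_k` converges and `v_k → 0`, then the recursion
`y_{k+1} = y_k + α_k F_k y_k + α_k (e_k + v_k)` tends to zero for any initial value. -/
theorem stmt6 {n : ℕ} (F : ℕ → Matrix (Fin n) (Fin n) ℝ) (Flim : Matrix (Fin n) (Fin n) ℝ)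
    (hF : Tendsto F atTop (nhds Flim))
    (hstable : ∀ z ∈ spectrum ℂ (Flim.map (Complex.ofReal : ℝ → ℂ)), z.re < 0)
    (α : ℕ → ℝ) (hαpos : ∀ k, 0 < α k) (hα0 : Tendsto α atTop (nhds 0))
    (hαdiv : Tendsto (fun N => ∑ k ∈ Finset.range N, α k) atTop atTop)
    (e v : ℕ → Fin n → ℝ)
    (he : ∃ s : Fin n → ℝ,
      Tendsto (fun N => ∑ k ∈ Finset.range N, α k • e k) atTop (nhds s))
    (hv : Tendsto v atTop (nhds 0))
    (y : ℕ → Fin n → ℝ)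
    (hrec : ∀ k, y (k + 1) = y k + α k • (F k).mulVec (y k) + α k • (e k + v k)) :
    Tendsto y atTop (nhds 0) := by
  obtain ⟨s, hs⟩ := he
  obtain ⟨φ, Cφ, α₀, η, hα₀pos, hηpos, hCφ0, hφ_ge, hφ_le, hφ_add, hφ_smul, hφ_slope⟩ :=
    Stmt6Helper.exists_good_norm Flim hstable
  -- tail of the convergent series
  set r : ℕ → (Fin n → ℝ) := fun k => s - ∑ j ∈ Finset.range k, α j • e j with hr
  have hr0 : Tendsto r atTop (nhds 0) := by
    have h1 := hs.const_sub s
    simpa [hr] using h1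
  set z : ℕ → (Fin n → ℝ) := fun k => y k + r k with hz
  set w : ℕ → (Fin n → ℝ) := fun k => v k - (F k).mulVec (r k) with hw
  have hrrec : ∀ k, r (k + 1) = r k - α k • e k := by
    intro k
    rw [hr]
    simp only [Finset.sum_range_succ]
    abel
  have hzrec : ∀ k, z (k + 1) = z k + α k • (F k).mulVec (z k) + α k • w k := by
    intro k
    simp only [hz, hw, hrec k, hrrec k, Matrix.mulVec_add, smul_add, smul_sub]
    abel
  -- entrywise convergence facts
  have hent : ∀ i j, Tendsto (fun k => F k i j) atTop (nhds (Flim i j)) := by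
    intro i j
    have h1 := tendsto_pi_nhds.1 hF i
    exact tendsto_pi_nhds.1 h1 j
  have hβ : Tendsto (fun k => Stmt6Helper.mvB (F k - Flim)) atTop (nhds 0) := by
    have h0 : (0 : ℝ) = ∑ i : Fin n, ∑ j : Fin n, (0:ℝ) := by simp
    unfold Stmt6Helper.mvB
    rw [h0]
    refine tendsto_finset_sum _ fun i _ => ?_
    refine tendsto_finset_sum _ fun j _ => ?_
    have h1 : Tendsto (fun k => F k i j - Flim i j) atTop (nhds 0) := by
      simpa using (hent i j).sub_const (Flim i j)
    simpa using h1.norm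
  have hFbd : ∃ CF : ℝ, 0 ≤ CF ∧ ∀ k, Stmt6Helper.mvB (F k) ≤ CF := by
    have hmv : Tendsto (fun k => Stmt6Helper.mvB (F k)) atTop (nhds (Stmt6Helper.mvB Flim)) := by
      unfold Stmt6Helper.mvB
      refine tendsto_finset_sum _ fun i _ => ?_
      refine tendsto_finset_sum _ fun j _ => ?_
      exact (hent i j).norm
    obtain ⟨CF, hCF⟩ := hmv.bddAbove_range
    refine ⟨max CF 0, le_max_right _ _, fun k => ?_⟩
    exact le_trans (hCF (Set.mem_range_self k)) (le_max_left _ _)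
  obtain ⟨CF, hCF0, hCF⟩ := hFbd
  -- w → 0
  have hwr : Tendsto w atTop (nhds 0) := by
    have hFr : Tendsto (fun k => (F k).mulVec (r k)) atTop (nhds 0) := by
      rw [tendsto_zero_iff_norm_tendsto_zero]
      refine squeeze_zero (g := fun k => CF * ‖r k‖) (fun k => norm_nonneg _) (fun k => ?_) ?_
      · exact le_trans (Stmt6Helper.norm_mulVec_le (F k) (r k))
          (mul_le_mul_of_nonneg_right (hCF k) (norm_nonneg _))
      · have := (tendsto_zero_iff_norm_tendsto_zero.1 hr0).const_mul CF
        simpa using this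
    have := hv.sub hFr
    simpa [hw] using this
  -- choose K
  have hev1 : ∀ᶠ k in atTop, α k < α₀ := hα0.eventually_lt_const hα₀pos
  have hev2 : ∀ᶠ k in atTop, α k < 2 / η := hα0.eventually_lt_const (by positivity)
  have hev3 : ∀ᶠ k in atTop, Cφ * Stmt6Helper.mvB (F k - Flim) < η / 2 := by
    have h1 : Tendsto (fun k => Cφ * Stmt6Helper.mvB (F k - Flim)) atTop (nhds 0) := by
      simpa using hβ.const_mul Cφ
    exact h1.eventually_lt_const (by positivity)
  obtain ⟨K, hK⟩ := eventually_atTop.1 ((hev1.and hev2).and hev3)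
  -- main estimate
  set a : ℕ → ℝ := fun k => φ (z k) with ha
  set b : ℕ → ℝ := fun k => Cφ * ‖w k‖ with hb
  have ha0 : ∀ k, 0 ≤ a k := fun k => le_trans (norm_nonneg (z k)) (hφ_ge (z k))
  have hb0 : ∀ k, 0 ≤ b k := fun k => mul_nonneg hCφ0 (norm_nonneg _)
  have hbt : Tendsto b atTop (nhds 0) := by
    have := (tendsto_zero_iff_norm_tendsto_zero.1 hwr).const_mul Cφ
    simpa [hb] using this
  have hmain : ∀ k, K ≤ k → a (k + 1) ≤ (1 - η / 2 * α k) * a k + α k * b k := by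
    intro k hk
    obtain ⟨⟨hk1, hk2⟩, hk3⟩ := hK k hk
    have hαk := (hαpos k).le
    have hdecomp : z (k + 1) = (z k + α k • Flim.mulVec (z k))
        + α k • ((F k - Flim).mulVec (z k)) + α k • w k := by
      rw [hzrec k, Matrix.sub_mulVec, smul_sub]
      module
    have h1 : a (k + 1) ≤ φ (z k + α k • Flim.mulVec (z k))
        + φ (α k • ((F k - Flim).mulVec (z k))) + φ (α k • w k) := by
      rw [ha]
      simp only [hdecomp]
      exact le_trans (hφ_add _ _) (add_le_add_left (hφ_add _ _) _)
    have h2 : φ (z k + α k • Flim.mulVec (z k)) ≤ (1 - η * α k) * a k :=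
      hφ_slope (α k) (z k) hαk hk1.le
    have h3 : φ (α k • ((F k - Flim).mulVec (z k))) ≤ α k * (η / 2 * a k) := by
      rw [hφ_smul _ _ hαk]
      refine mul_le_mul_of_nonneg_left ?_ hαk
      calc φ ((F k - Flim).mulVec (z k)) ≤ Cφ * ‖(F k - Flim).mulVec (z k)‖ := hφ_le _
        _ ≤ Cφ * (Stmt6Helper.mvB (F k - Flim) * ‖z k‖) :=
            mul_le_mul_of_nonneg_left (Stmt6Helper.norm_mulVec_le _ _) hCφ0
        _ = (Cφ * Stmt6Helper.mvB (F k - Flim)) * ‖z k‖ := by ring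
        _ ≤ (η / 2) * ‖z k‖ :=
            mul_le_mul_of_nonneg_right hk3.le (norm_nonneg _)
        _ ≤ (η / 2) * a k :=
            mul_le_mul_of_nonneg_left (hφ_ge (z k)) (by positivity)
    have h4 : φ (α k • w k) ≤ α k * b k := by
      rw [hφ_smul _ _ hαk, hb]
      refine mul_le_mul_of_nonneg_left ?_ hαk
      exact hφ_le (w k)
    have := add_le_add (add_le_add h2 h3) h4
    have hfin := le_trans h1 this
    calc a (k + 1) ≤ (1 - η * α k) * a k + α k * (η / 2 * a k) + α k * b k := hfin
      _ = (1 - η / 2 * α k) * a k + α k * b k := by ring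
  have hat : Tendsto a atTop (nhds 0) := by
    refine Stmt6Helper.scalar_rec a b α (η / 2) (by positivity) K ha0 hb0 hbt
      (fun k hk => ⟨(hαpos k).le, ?_⟩) hαdiv hmain
    obtain ⟨⟨hk1, hk2⟩, _⟩ := hK k hk
    have h1 : α k * η < 2 := (lt_div_iff₀ hηpos).1 hk2
    nlinarith
  have hzt : Tendsto z atTop (nhds 0) := by
    rw [tendsto_zero_iff_norm_tendsto_zero]
    exact squeeze_zero (fun k => norm_nonneg _) (fun k => hφ_ge (z k)) hat
  have hyz : Tendsto (fun k => z k - r k) atTop (nhds 0) := by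
    have := hzt.sub hr0
    simpa using this
  refine hyz.congr fun k => ?_
  simp [hz]
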